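/- In any simple graph G, the number of 4-cycles satisfies n_G(C₄) = (1/2) ∑_{{st,uv}∈Q} (a_{sv}a_{tu} + a_{su}a_{tv}), where Q is the set of unordered pairs of vertex-disjoint edges. -/

import Mathlib

open Finset BigOperators SimpleGraph

set_option linter.unusedSectionVars false
set_option maxHeartbeats 1000000

namespace CrossVar

variable {V : Type} [Fintype V] [DecidableEq V]

/-- Adjacency indicator `a_{xy}`. -/
def a (G : SimpleGraph V) [DecidableRel G.Adj] (x y : V) : ℚ := if G.Adj x y then 1 else 0

/-- Degree `k_v` as a rational number. -/
def deg (G : SimpleGraph V) [DecidableRel G.Adj] (v : V) : ℚ := (G.degree v : ℚ)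

/-- Sum over the set `Q` of unordered pairs `{st, uv}` of vertex-disjoint (independent) edges of
`G` of a function `f s t u v` (intended to be invariant under `s ↔ t`, `u ↔ v` and
`(s,t) ↔ (u,v)`).  Each unordered pair of independent edges corresponds to exactly `8` ordered
tuples `(s,t,u,v)`, whence the division by `8`. -/
def Qsum (G : SimpleGraph V) [DecidableRel G.Adj] (f : V → V → V → V → ℚ) : ℚ :=
  (∑ s, ∑ t, ∑ u, ∑ v,
    if G.Adj s t ∧ G.Adj u v ∧ s ≠ u ∧ s ≠ v ∧ t ≠ u ∧ t ≠ v then f s t u v else 0) / 8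

/-- Sum over the unordered edges `{s,t} ∈ E` of `f s t` (intended for symmetric `f`);
each unordered edge corresponds to two ordered adjacent pairs, whence the division by `2`. -/
def edgeSum (G : SimpleGraph V) [DecidableRel G.Adj] (f : V → V → ℚ) : ℚ :=
  (∑ s, ∑ t, if G.Adj s t then f s t else 0) / 2

/-- The number of subgraphs of `G` isomorphic to `F` (each unlabeled copy counted once). -/
noncomputable def copyCount {α : Type} (G : SimpleGraph V) (F : SimpleGraph α) : ℕ :=
  Nat.card {H : G.Subgraph // Nonempty (H.coe ≃g F)}

/-- `ξ(v)`: the sum of the degrees of the neighbours of `v`. -/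
def xi (G : SimpleGraph V) [DecidableRel G.Adj] (v : V) : ℚ :=
  ∑ u ∈ G.neighborFinset v, deg G u

/-- The paw graph: a triangle `{0,1,2}` with a pendant edge `{2,3}`. -/
def pawGraph : SimpleGraph (Fin 4) :=
  SimpleGraph.fromRel (fun x y => (x, y) ∈ [((0 : Fin 4), (1 : Fin 4)), (0, 2), (1, 2), (2, 3)])

/-- `C₃ ⊕ P₂`: the disjoint union of a triangle `{0,1,2}` and an edge `{3,4}`. -/
def triEdgeGraph : SimpleGraph (Fin 5) :=
  SimpleGraph.fromRel (fun x y => (x, y) ∈ [((0 : Fin 5), (1 : Fin 5)), (0, 2), (1, 2), (3, 4)])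

/-! ### Auxiliary machinery for counting 4-cycles -/

def cycRel (s t u v : V) (x y : V) : Prop :=
  (x = s ∧ y = t) ∨ (x = t ∧ y = s) ∨ (x = t ∧ y = u) ∨ (x = u ∧ y = t) ∨
  (x = u ∧ y = v) ∨ (x = v ∧ y = u) ∨ (x = v ∧ y = s) ∨ (x = s ∧ y = v)

def cyc (G : SimpleGraph V) (s t u v : V) : G.Subgraph where
  verts := {s, t, u, v}
  Adj x y := cycRel s t u v x y ∧ G.Adj x y
  adj_sub h := h.2
  edge_vert {x y} h := by
    rcases h.1 with ⟨rfl,-⟩|⟨rfl,-⟩|⟨rfl,-⟩|⟨rfl,-⟩|⟨rfl,-⟩|⟨rfl,-⟩|⟨rfl,-⟩|⟨rfl,-⟩ <;>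
      simp [Set.mem_insert_iff]
  symm := ⟨fun x y (h : cycRel s t u v x y ∧ G.Adj x y) => ⟨by unfold cycRel at *; tauto, h.2.symm⟩⟩

def goodT (G : SimpleGraph V) (s t u v : V) : Prop :=
  G.Adj s t ∧ G.Adj t u ∧ G.Adj u v ∧ G.Adj v s ∧ s ≠ u ∧ t ≠ v

instance (G : SimpleGraph V) [DecidableRel G.Adj] (s t u v : V) :
    Decidable (goodT G s t u v) := by unfold goodT; exact inferInstance

lemma cyc_adj {G : SimpleGraph V} {s t u v : V} (h : goodT G s t u v) (x y : V) :
    (cyc G s t u v).Adj x y ↔ cycRel s t u v x y := by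
  obtain ⟨h1, h2, h3, h4, h5, h6⟩ := h
  constructor
  · exact fun hh => hh.1
  · intro hr
    refine ⟨hr, ?_⟩
    rcases hr with ⟨rfl,rfl⟩|⟨rfl,rfl⟩|⟨rfl,rfl⟩|⟨rfl,rfl⟩|⟨rfl,rfl⟩|⟨rfl,rfl⟩|⟨rfl,rfl⟩|⟨rfl,rfl⟩
    exacts [h1, h1.symm, h2, h2.symm, h3, h3.symm, h4, h4.symm]

lemma cyc_congr {G : SimpleGraph V} {s t u v s' t' u' v' : V}
    (hv : ∀ x, (x = s ∨ x = t ∨ x = u ∨ x = v) ↔ (x = s' ∨ x = t' ∨ x = u' ∨ x = v'))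
    (ha : ∀ x y, cycRel s t u v x y ↔ cycRel s' t' u' v' x y) :
    cyc G s t u v = cyc G s' t' u' v' := by
  apply SimpleGraph.Subgraph.ext
  · ext x; simpa [cyc, Set.mem_insert_iff] using hv x
  · ext x y; simp only [cyc]; rw [ha]

lemma cyc_rot {G : SimpleGraph V} (s t u v : V) : cyc G s t u v = cyc G t u v s :=
  cyc_congr (fun x => by tauto) (fun x y => by unfold cycRel; tauto)

lemma cyc_rev {G : SimpleGraph V} (s t u v : V) : cyc G s t u v = cyc G s v u t :=
  cyc_congr (fun x => by tauto) (fun x y => by unfold cycRel; tauto)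

lemma goodT_rot {G : SimpleGraph V} {s t u v : V} (h : goodT G s t u v) : goodT G t u v s :=
  ⟨h.2.1, h.2.2.1, h.2.2.2.1, h.1, h.2.2.2.2.2, h.2.2.2.2.1.symm⟩

lemma goodT_rev {G : SimpleGraph V} {s t u v : V} (h : goodT G s t u v) : goodT G s v u t :=
  ⟨h.2.2.2.1.symm, h.2.2.1.symm, h.2.1.symm, h.1.symm, h.2.2.2.2.1, fun e => h.2.2.2.2.2 e.symm⟩

lemma cyc_iso {G : SimpleGraph V} {s t u v : V} (h : goodT G s t u v) :
    Nonempty ((cyc G s t u v).coe ≃g cycleGraph 4) := by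
  have n1 : s ≠ t := h.1.ne
  have n2 : t ≠ u := h.2.1.ne
  have n3 : u ≠ v := h.2.2.1.ne
  have n4 : v ≠ s := h.2.2.2.1.ne
  have n5 : s ≠ u := h.2.2.2.2.1
  have n6 : t ≠ v := h.2.2.2.2.2
  have hs : s ∈ (cyc G s t u v).verts := by simp [cyc]
  have ht : t ∈ (cyc G s t u v).verts := by simp [cyc]
  have hu : u ∈ (cyc G s t u v).verts := by simp [cyc]
  have hv : v ∈ (cyc G s t u v).verts := by simp [cyc]
  let f : Fin 4 → (cyc G s t u v).verts := ![⟨s, hs⟩, ⟨t, ht⟩, ⟨u, hu⟩, ⟨v, hv⟩]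
  let g : (cyc G s t u v).verts → Fin 4 :=
    fun x => if x.1 = s then 0 else if x.1 = t then 1 else if x.1 = u then 2 else 3
  have hfg : ∀ i, g (f i) = i := by
    intro i
    fin_cases i <;>
      simp [f, g, n1, n2, n3, n4, n5, n6, n1.symm, n2.symm, n3.symm, n4.symm, n5.symm, n6.symm]
  have hgf : ∀ x, f (g x) = x := by
    rintro ⟨x, hx⟩
    have : x = s ∨ x = t ∨ x = u ∨ x = v := by simpa [cyc, Set.mem_insert_iff] using hx
    rcases this with rfl | rfl | rfl | rfl <;>
      simp [f, g, n1, n2, n3, n4, n5, n6, n1.symm, n2.symm, n3.symm, n4.symm, n5.symm, n6.symm]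
  refine ⟨(⟨⟨f, g, hfg, hgf⟩, ?_⟩ : cycleGraph 4 ≃g (cyc G s t u v).coe).symm⟩
  intro i j
  fin_cases i <;> fin_cases j <;>
    simp [f, Subgraph.coe_adj, cyc_adj h, cycRel, cycleGraph_adj,
      n1, n2, n3, n4, n5, n6, n1.symm, n2.symm, n3.symm, n4.symm, n5.symm, n6.symm] <;>
    decide

lemma exists_tuple {G : SimpleGraph V} {H : G.Subgraph} (e : H.coe ≃g cycleGraph 4) :
    ∃ s t u v, goodT G s t u v ∧ H = cyc G s t u v := by
  let f := e.symm
  have hrep : ∀ x, ∀ hx : x ∈ H.verts, ∃ i : Fin 4, (f i).1 = x := fun x hx =>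
    ⟨e ⟨x, hx⟩, congrArg Subtype.val (e.symm_apply_apply ⟨x, hx⟩)⟩
  have hinj : ∀ i j : Fin 4, i ≠ j → (f i).1 ≠ (f j).1 := fun i j hij hx =>
    hij (f.toEquiv.injective (Subtype.ext hx))
  have hadj : ∀ i j : Fin 4, (cycleGraph 4).Adj i j → H.Adj (f i).1 (f j).1 :=
    fun i j hij => f.map_rel_iff.mpr hij
  have hadj' : ∀ i j : Fin 4, H.Adj (f i).1 (f j).1 → (cycleGraph 4).Adj i j :=
    fun i j hij => f.map_rel_iff.mp hij
  have hfin : ∀ i : Fin 4, i = 0 ∨ i = 1 ∨ i = 2 ∨ i = 3 := by decide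
  refine ⟨(f 0).1, (f 1).1, (f 2).1, (f 3).1,
    ⟨H.adj_sub (hadj 0 1 (by decide)), H.adj_sub (hadj 1 2 (by decide)),
     H.adj_sub (hadj 2 3 (by decide)), H.adj_sub (hadj 3 0 (by decide)),
     hinj 0 2 (by decide), hinj 1 3 (by decide)⟩, ?_⟩
  apply SimpleGraph.Subgraph.ext
  · ext x
    simp only [cyc, Set.mem_insert_iff, Set.mem_singleton_iff]
    constructor
    · intro hx
      obtain ⟨i, hi⟩ := hrep x hx
      rcases hfin i with rfl | rfl | rfl | rfl <;> tauto
    · rintro (rfl | rfl | rfl | rfl)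
      exacts [(f 0).2, (f 1).2, (f 2).2, (f 3).2]
  · ext x y
    simp only [cyc]
    constructor
    · intro hxy
      obtain ⟨i, rfl⟩ := hrep x (H.edge_vert hxy)
      obtain ⟨j, rfl⟩ := hrep y (H.edge_vert (H.adj_symm hxy))
      have hij := hadj' i j hxy
      refine ⟨?_, H.adj_sub hxy⟩
      rcases hfin i with rfl | rfl | rfl | rfl <;> rcases hfin j with rfl | rfl | rfl | rfl <;>
        first
          | exact absurd hij (by decide)
          | (unfold cycRel; tauto)
    · rintro ⟨hr, -⟩
      rcases hr with ⟨rfl,rfl⟩|⟨rfl,rfl⟩|⟨rfl,rfl⟩|⟨rfl,rfl⟩|⟨rfl,rfl⟩|⟨rfl,rfl⟩|⟨rfl,rfl⟩|⟨rfl,rfl⟩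
      exacts [hadj 0 1 (by decide), hadj 1 0 (by decide), hadj 1 2 (by decide),
        hadj 2 1 (by decide), hadj 2 3 (by decide), hadj 3 2 (by decide),
        hadj 3 0 (by decide), hadj 0 3 (by decide)]

lemma tuple_eq {G : SimpleGraph V} {s t u v s' t' u' v' : V} (h : goodT G s t u v)
    (h' : goodT G s' t' u' v') (he : cyc G s' t' u' v' = cyc G s t u v) :
    (s'=s∧t'=t∧u'=u∧v'=v) ∨ (s'=t∧t'=u∧u'=v∧v'=s) ∨ (s'=u∧t'=v∧u'=s∧v'=t) ∨
    (s'=v∧t'=s∧u'=t∧v'=u) ∨ (s'=s∧t'=v∧u'=u∧v'=t) ∨ (s'=v∧t'=u∧u'=t∧v'=s) ∨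
    (s'=u∧t'=t∧u'=s∧v'=v) ∨ (s'=t∧t'=s∧u'=v∧v'=u) := by
  have n1 : s ≠ t := h.1.ne
  have n2 : t ≠ u := h.2.1.ne
  have n3 : u ≠ v := h.2.2.1.ne
  have n4 : v ≠ s := h.2.2.2.1.ne
  have n5 : s ≠ u := h.2.2.2.2.1
  have n6 : t ≠ v := h.2.2.2.2.2
  have m1 : s' ≠ t' := h'.1.ne
  have m2 : t' ≠ u' := h'.2.1.ne
  have m3 : u' ≠ v' := h'.2.2.1.ne
  have m4 : v' ≠ s' := h'.2.2.2.1.ne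
  have m5 : s' ≠ u' := h'.2.2.2.2.1
  have m6 : t' ≠ v' := h'.2.2.2.2.2
  have c1 : cycRel s t u v s' t' :=
    (cyc_adj h _ _).mp (he ▸ (cyc_adj h' s' t').mpr (Or.inl ⟨rfl, rfl⟩))
  have c2 : cycRel s t u v t' u' :=
    (cyc_adj h _ _).mp (he ▸ (cyc_adj h' t' u').mpr (Or.inr (Or.inr (Or.inl ⟨rfl, rfl⟩))))
  have c3 : cycRel s t u v u' v' :=
    (cyc_adj h _ _).mp
      (he ▸ (cyc_adj h' u' v').mpr (Or.inr (Or.inr (Or.inr (Or.inr (Or.inl ⟨rfl, rfl⟩))))))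
  clear he h h'
  rcases c1 with ⟨rfl,rfl⟩|⟨rfl,rfl⟩|⟨rfl,rfl⟩|⟨rfl,rfl⟩|⟨rfl,rfl⟩|⟨rfl,rfl⟩|⟨rfl,rfl⟩|⟨rfl,rfl⟩ <;>
    rcases c2 with ⟨e1,rfl⟩|⟨e1,rfl⟩|⟨e1,rfl⟩|⟨e1,rfl⟩|⟨e1,rfl⟩|⟨e1,rfl⟩|⟨e1,rfl⟩|⟨e1,rfl⟩ <;>
    rcases c3 with ⟨e2,rfl⟩|⟨e2,rfl⟩|⟨e2,rfl⟩|⟨e2,rfl⟩|⟨e2,rfl⟩|⟨e2,rfl⟩|⟨e2,rfl⟩|⟨e2,rfl⟩ <;>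
    (try simp_all) <;> tauto

lemma count_main (G : SimpleGraph V) [DecidableRel G.Adj] :
    (univ.filter (fun p : V×V×V×V => goodT G p.1 p.2.1 p.2.2.1 p.2.2.2)).card =
      8 * copyCount G (cycleGraph 4) := by
  classical
  have hmem : ∀ H : G.Subgraph, Nonempty (H.coe ≃g cycleGraph 4) ↔
      H ∈ (univ.filter (fun p : V×V×V×V => goodT G p.1 p.2.1 p.2.2.1 p.2.2.2)).image
        (fun p : V×V×V×V => cyc G p.1 p.2.1 p.2.2.1 p.2.2.2) := by
    intro H
    constructor
    · rintro ⟨e⟩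
      obtain ⟨s, t, u, v, hg, rfl⟩ := exists_tuple e
      exact Finset.mem_image.mpr ⟨(s,t,u,v), Finset.mem_filter.mpr ⟨Finset.mem_univ _, hg⟩, rfl⟩
    · intro hH
      obtain ⟨p, hp, rfl⟩ := Finset.mem_image.mp hH
      exact cyc_iso (Finset.mem_filter.mp hp).2
  have hcc : copyCount G (cycleGraph 4) =
      ((univ.filter (fun p : V×V×V×V => goodT G p.1 p.2.1 p.2.2.1 p.2.2.2)).image
        (fun p : V×V×V×V => cyc G p.1 p.2.1 p.2.2.1 p.2.2.2)).card := by
    rw [copyCount, Nat.card_congr (Equiv.subtypeEquivRight fun H => hmem H)]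
    exact Nat.card_eq_finsetCard _
  rw [hcc]
  rw [Finset.card_eq_sum_card_fiberwise
    (fun x hx => Finset.mem_image_of_mem (fun p : V×V×V×V => cyc G p.1 p.2.1 p.2.2.1 p.2.2.2) hx)]
  rw [Finset.sum_congr rfl ?_, Finset.sum_const, smul_eq_mul, mul_comm]
  intro H hH
  obtain ⟨p, hp, rfl⟩ := Finset.mem_image.mp hH
  obtain ⟨s, t, u, v⟩ := p
  have hg : goodT G s t u v := (Finset.mem_filter.mp hp).2
  have n1 : s ≠ t := hg.1.ne
  have n2 : t ≠ u := hg.2.1.ne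
  have n3 : u ≠ v := hg.2.2.1.ne
  have n4 : v ≠ s := hg.2.2.2.1.ne
  have n5 : s ≠ u := hg.2.2.2.2.1
  have n6 : t ≠ v := hg.2.2.2.2.2
  have g2 := goodT_rot hg
  have g3 := goodT_rot g2
  have g4 := goodT_rot g3
  have g5 := goodT_rev hg
  have g6 := goodT_rev g4
  have g7 := goodT_rev g3
  have g8 := goodT_rev g2
  have E2 : cyc G t u v s = cyc G s t u v := (cyc_rot s t u v).symm
  have E3 : cyc G u v s t = cyc G s t u v := by rw [← E2]; exact (cyc_rot t u v s).symm
  have E4 : cyc G v s t u = cyc G s t u v := by rw [← E3]; exact (cyc_rot u v s t).symm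
  have E5 : cyc G s v u t = cyc G s t u v := (cyc_rev s t u v).symm
  have E6 : cyc G v u t s = cyc G s t u v := by rw [← E4]; exact (cyc_rev v s t u).symm
  have E7 : cyc G u t s v = cyc G s t u v := by rw [← E3]; exact (cyc_rev u v s t).symm
  have E8 : cyc G t s v u = cyc G s t u v := by rw [← E2]; exact (cyc_rev t u v s).symm
  have key : (univ.filter (fun p : V×V×V×V => goodT G p.1 p.2.1 p.2.2.1 p.2.2.2)).filter
      (fun q : V×V×V×V => cyc G q.1 q.2.1 q.2.2.1 q.2.2.2 = cyc G s t u v) =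
      ({(s,t,u,v),(t,u,v,s),(u,v,s,t),(v,s,t,u),(s,v,u,t),(v,u,t,s),(u,t,s,v),(t,s,v,u)} :
        Finset (V×V×V×V)) := by
    ext ⟨a,b,c,d⟩
    simp only [Finset.mem_filter, Finset.mem_insert, Finset.mem_singleton, Finset.mem_univ,
      true_and, Prod.mk.injEq]
    constructor
    · rintro ⟨hgq, heq⟩
      have := tuple_eq hg hgq heq
      tauto
    · rintro (⟨rfl,rfl,rfl,rfl⟩|⟨rfl,rfl,rfl,rfl⟩|⟨rfl,rfl,rfl,rfl⟩|⟨rfl,rfl,rfl,rfl⟩|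
        ⟨rfl,rfl,rfl,rfl⟩|⟨rfl,rfl,rfl,rfl⟩|⟨rfl,rfl,rfl,rfl⟩|⟨rfl,rfl,rfl,rfl⟩)
      exacts [⟨hg, rfl⟩, ⟨g2, E2⟩, ⟨g3, E3⟩, ⟨g4, E4⟩, ⟨g5, E5⟩, ⟨g6, E6⟩, ⟨g7, E7⟩, ⟨g8, E8⟩]
  rw [key]
  rw [Finset.card_insert_of_notMem, Finset.card_insert_of_notMem,
    Finset.card_insert_of_notMem, Finset.card_insert_of_notMem,
    Finset.card_insert_of_notMem, Finset.card_insert_of_notMem,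
    Finset.card_insert_of_notMem, Finset.card_singleton] <;>
    simp [Prod.ext_iff, n1, n2, n3, n4, n5, n6,
      n1.symm, n2.symm, n3.symm, n4.symm, n5.symm, n6.symm]

lemma point (G : SimpleGraph V) [DecidableRel G.Adj] (s t u v : V) :
    (if G.Adj s t ∧ G.Adj u v ∧ s ≠ u ∧ s ≠ v ∧ t ≠ u ∧ t ≠ v
      then a G s v * a G t u + a G s u * a G t v else 0)
    = (if goodT G s t u v then (1:ℚ) else 0) + (if goodT G s t v u then 1 else 0) := by
  by_cases hc : G.Adj s t ∧ G.Adj u v ∧ s ≠ u ∧ s ≠ v ∧ t ≠ u ∧ t ≠ v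
  · obtain ⟨h1, h2, d1, d2, d3, d4⟩ := hc
    rw [if_pos ⟨h1, h2, d1, d2, d3, d4⟩]
    have e1 : goodT G s t u v ↔ (G.Adj s v ∧ G.Adj t u) := by
      constructor
      · exact fun hg => ⟨hg.2.2.2.1.symm, hg.2.1⟩
      · rintro ⟨x1, x2⟩; exact ⟨h1, x2, h2, x1.symm, d1, d4⟩
    have e2 : goodT G s t v u ↔ (G.Adj s u ∧ G.Adj t v) := by
      constructor
      · exact fun hg => ⟨hg.2.2.2.1.symm, hg.2.1⟩
      · rintro ⟨x1, x2⟩; exact ⟨h1, x2, h2.symm, x1.symm, d2, d3⟩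
    rw [if_congr e1 rfl rfl, if_congr e2 rfl rfl]
    unfold a
    by_cases p1 : G.Adj s v <;> by_cases p2 : G.Adj t u <;> by_cases p3 : G.Adj s u <;>
      by_cases p4 : G.Adj t v <;> simp [p1, p2, p3, p4]
  · rw [if_neg hc]
    have e1 : ¬ goodT G s t u v := fun hg =>
      hc ⟨hg.1, hg.2.2.1, hg.2.2.2.2.1, hg.2.2.2.1.ne.symm, hg.2.1.ne, hg.2.2.2.2.2⟩
    have e2 : ¬ goodT G s t v u := fun hg =>
      hc ⟨hg.1, hg.2.2.1.symm, hg.2.2.2.1.ne.symm, hg.2.2.2.2.1, hg.2.2.2.2.2, hg.2.1.ne⟩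
    rw [if_neg e1, if_neg e2]; norm_num

theorem stmt5 (G : SimpleGraph V) [DecidableRel G.Adj] :
    (copyCount G (cycleGraph 4) : ℚ) =
      (1 / 2) * Qsum G (fun s t u v => a G s v * a G t u + a G s u * a G t v) := by
  have hA : (∑ s, ∑ t, ∑ u, ∑ v, if goodT G s t u v then (1:ℚ) else 0)
      = ((univ.filter (fun p : V×V×V×V => goodT G p.1 p.2.1 p.2.2.1 p.2.2.2)).card : ℚ) := by
    rw [← Finset.sum_boole (fun p : V×V×V×V => goodT G p.1 p.2.1 p.2.2.1 p.2.2.2) univ]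
    simp only [Fintype.sum_prod_type]
  have hB : (∑ s, ∑ t, ∑ u, ∑ v, if goodT G s t v u then (1:ℚ) else 0)
      = ∑ s, ∑ t, ∑ u, ∑ v, if goodT G s t u v then (1:ℚ) else 0 :=
    Finset.sum_congr rfl fun s _ => Finset.sum_congr rfl fun t _ => Finset.sum_comm
  have hsum : (∑ s, ∑ t, ∑ u, ∑ v,
      if G.Adj s t ∧ G.Adj u v ∧ s ≠ u ∧ s ≠ v ∧ t ≠ u ∧ t ≠ v
        then a G s v * a G t u + a G s u * a G t v else 0) =
      2 * ((univ.filter (fun p : V×V×V×V => goodT G p.1 p.2.1 p.2.2.1 p.2.2.2)).card : ℚ) := by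
    simp only [point G, Finset.sum_add_distrib]
    rw [hB, hA]; ring
  have hc := count_main G
  have hc' : ((univ.filter (fun p : V×V×V×V => goodT G p.1 p.2.1 p.2.2.1 p.2.2.2)).card : ℚ)
      = 8 * (copyCount G (cycleGraph 4) : ℚ) := by exact_mod_cast hc
  simp only [Qsum]
  rw [hsum, hc']
  ring

end CrossVar
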